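/- Let m ≥ 5 be odd, h = (m-1)/2, n = q^m - 1. The number of integers a with 1 ≤ a ≤ q^{h+2}, q ∤ a, such that a is not the coset leader of its q-cyclotomic coset modulo n, equals q(q-1)^2. -/

import Mathlib

/-- The q-cyclotomic coset of a modulo n: {a * q^j mod n : j ≥ 0}. -/
def cyclCoset (q n a : ℕ) : Finset ℕ :=
  (Finset.range n).image (fun j => a * q ^ j % n)

/-- a is the coset leader (smallest element) of its q-cyclotomic coset modulo n. -/
def IsCosetLeader (q n a : ℕ) : Prop :=
  ∀ j : ℕ, a ≤ a * q ^ j % n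

open Finset
namespace Stmt7

lemma div_of (k x s : ℕ) (hk : 0 < k) (hs : s < k) : (x * k + s) / k = x := by
  rw [mul_comm, Nat.mul_add_div hk, Nat.div_eq_of_lt hs, add_zero]

lemma mod_of (k x s : ℕ) (hs : s < k) : (x * k + s) % k = s := by
  rw [mul_comm, Nat.mul_add_mod, Nat.mod_eq_of_lt hs]

lemma modeq_rot (q n m j a : ℕ) (hn : q ^ m = n + 1) (hj : j ≤ m) :
    a * q ^ j % n = (a / q ^ (m - j) + a % q ^ (m - j) * q ^ j) % n := by
  have hsplit : q ^ (m - j) * q ^ j = q ^ m := by rw [← pow_add]; congr 1; omega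
  have h1 : a * q ^ j = (a / q ^ (m - j) + a % q ^ (m - j) * q ^ j)
      + (a / q ^ (m - j)) * n := by
    calc a * q ^ j = (a / q ^ (m-j) * q ^ (m-j) + a % q ^ (m-j)) * q ^ j := by
          rw [Nat.div_add_mod']
      _ = a / q ^ (m-j) * (q ^ (m-j) * q ^ j) + a % q ^ (m-j) * q ^ j := by ring
      _ = a / q ^ (m-j) * (n + 1) + a % q ^ (m-j) * q ^ j := by rw [hsplit, hn]
      _ = _ := by ring
  rw [h1, Nat.add_mul_mod_self_right]

lemma rot_period (q n m j a : ℕ) (hn : q ^ m = n + 1) :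
    a * q ^ j % n = a * q ^ (j % m) % n := by
  rcases Nat.eq_zero_or_pos m with hm | hm
  · simp [hm]
  have h1 : q ^ m ≡ 1 [MOD n] := by
    show q ^ m % n = 1 % n
    rw [hn]; exact Nat.add_mod_left n 1
  have h2 : q ^ j ≡ q ^ (j % m) [MOD n] := by
    conv_lhs => rw [← Nat.div_add_mod j m]
    rw [pow_add, pow_mul]
    calc (q ^ m) ^ (j / m) * q ^ (j % m)
        ≡ 1 ^ (j / m) * q ^ (j % m) [MOD n] := ((h1.pow _).mul_right _)
      _ = q ^ (j % m) := by rw [one_pow, one_mul]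
  exact (h2.mul_left a)

lemma rot_val (q h n j a : ℕ) (hq2 : 2 ≤ q) (hh : 2 ≤ h)
    (hn : q ^ (2*h+1) = n + 1) (hj : j ≤ 2*h) (ha : a < q ^ (h+2)) :
    a * q ^ j % n = a / q ^ (2*h+1 - j) + a % q ^ (2*h+1 - j) * q ^ j := by
  have hq0 : 0 < q := by omega
  have hval : a / q ^ (2*h+1 - j) + a % q ^ (2*h+1 - j) * q ^ j < n := by
    rcases le_or_gt (j+1) h with hc | hc
    · -- j ≤ h - 1 : small rotation
      have hle : a < q ^ (2*h+1-j) := lt_of_lt_of_le ha (Nat.pow_le_pow_right hq0 (by omega))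
      rw [Nat.div_eq_of_lt hle, Nat.mod_eq_of_lt hle, zero_add]
      have h1 : q ^ j ≤ q ^ (h-1) := Nat.pow_le_pow_right hq0 (by omega)
      have h2 : a * q ^ j ≤ (q ^ (h+2) - 1) * q ^ (h-1) :=
        Nat.mul_le_mul (by omega) h1
      have h3 : (q ^ (h+2) - 1) * q ^ (h-1) = q^(h+2) * q^(h-1) - q^(h-1) := by
        rw [Nat.sub_mul, one_mul]
      rw [h3] at h2
      have h4 : q^(h+2) * q^(h-1) = n + 1 := by rw [← pow_add, ← hn]; congr 1; omega
      have h5 : 2 ≤ q ^ (h-1) := le_trans hq2 (Nat.le_self_pow (by omega) q)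
      have h6 : 1 ≤ q ^ (h+2) := Nat.one_le_pow _ _ hq0
      have h7 : q^(h-1) ≤ q^(h+2) * q^(h-1) := Nat.le_mul_of_pos_left _ (by omega)
      omega
    · -- h ≤ j
      have hjh : h ≤ j := by omega
      set K := q ^ (2*h+1-j) with hK
      set B := q ^ (j - h + 1) with hB
      have hK0 : 0 < K := Nat.pow_pos hq0
      have hKB : K * B = q ^ (h+2) := by rw [hK, hB, ← pow_add]; congr 1; omega
      have hA : a / K < B := by
        rw [Nat.div_lt_iff_lt_mul hK0]
        rw [mul_comm] at hKB
        omega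
      have hKQ : K * q ^ j = n + 1 := by rw [hK, ← pow_add, ← hn]; congr 1; omega
      have hr : (a % K + 1) * q ^ j ≤ n + 1 := by
        have : a % K + 1 ≤ K := Nat.mod_lt a hK0
        calc (a % K + 1) * q ^ j ≤ K * q ^ j := Nat.mul_le_mul_right _ this
          _ = n + 1 := hKQ
      have hQB : 2 * B ≤ q ^ j := by
        have h1 : B * q ^ (h-1) = q ^ j := by rw [hB, ← pow_add]; congr 1; omega
        have h5 : 2 ≤ q ^ (h-1) := le_trans hq2 (Nat.le_self_pow (by omega) q)
        calc 2 * B = B * 2 := by ring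
          _ ≤ B * q ^ (h-1) := Nat.mul_le_mul_left _ h5
          _ = q ^ j := h1
      have hB2 : 2 ≤ B := le_trans hq2 (by rw [hB]; exact Nat.le_self_pow (by omega) q)
      rw [add_mul, one_mul] at hr
      have hgoal : a / K + a % K * q ^ j < n := by
        generalize a % K * q ^ j = RQ at hr
        omega
      exact hgoal
  rw [modeq_rot q n (2*h+1) j a hn (by omega), Nat.mod_eq_of_lt hval]


lemma leader_iff (q h n a : ℕ) (hq2 : 2 ≤ q) (hh : 2 ≤ h)
    (hn : q ^ (2*h+1) = n + 1) (ha1 : 1 ≤ a) (ha : a < q ^ (h+2)) (hqa : ¬ q ∣ a) :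
    IsCosetLeader q n a ↔
      (a ≤ a / q ^ (h+1) + a % q ^ (h+1) * q ^ h ∧
       a ≤ a / q ^ h + a % q ^ h * q ^ (h+1)) := by
  have hq0 : 0 < q := by omega
  have e1 : 2*h+1 - h = h + 1 := by omega
  have e2 : 2*h+1 - (h+1) = h := by omega
  constructor
  · intro L
    constructor
    · have := L h
      rwa [rot_val q h n h a hq2 hh hn (by omega) ha, e1] at this
    · have := L (h+1)
      rwa [rot_val q h n (h+1) a hq2 hh hn (by omega) ha, e2] at this
  · rintro ⟨H1, H2⟩ j
    rw [rot_period q n (2*h+1) j a hn]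
    have hjm : j % (2*h+1) < 2*h+1 := Nat.mod_lt _ (by omega)
    generalize hg : j % (2*h+1) = j' at hjm ⊢
    rw [rot_val q h n j' a hq2 hh hn (by omega) ha]
    rcases Nat.lt_or_ge j' h with hc | hc
    · -- j' ≤ h - 1 (includes j' = 0) : value = a * q^j'
      have hle : a < q ^ (2*h+1-j') := lt_of_lt_of_le ha (Nat.pow_le_pow_right hq0 (by omega))
      rw [Nat.div_eq_of_lt hle, Nat.mod_eq_of_lt hle, zero_add]
      exact Nat.le_mul_of_pos_right a (Nat.pow_pos hq0)
    · rcases Nat.lt_or_ge (h+1) j' with hc2 | hc2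
      · -- j' ≥ h+2
        have hr1 : 1 ≤ a % q ^ (2*h+1-j') := by
          rcases Nat.eq_zero_or_pos (a % q ^ (2*h+1-j')) with h0 | h0
          · exfalso
            apply hqa
            have hdvd : q ^ (2*h+1-j') ∣ a := Nat.dvd_of_mod_eq_zero h0
            exact dvd_trans (dvd_pow_self q (by omega)) hdvd
          · exact h0
        have hA : q ^ (h+2) ≤ q ^ j' := Nat.pow_le_pow_right hq0 (by omega)
        have hB : q ^ j' ≤ a % q ^ (2*h+1-j') * q ^ j' := Nat.le_mul_of_pos_left _ hr1
        exact le_trans (le_trans ha.le hA) (le_trans hB (Nat.le_add_left _ _))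
      · -- j' = h or h+1
        rcases Nat.eq_or_lt_of_le hc with he | hlt
        · rw [← he] at *
          rw [e1]
          exact H1
        · have : j' = h + 1 := by omega
          rw [this, e2]
          exact H2


set_option maxHeartbeats 1000000 in
lemma char (q h a : ℕ) (hq2 : 2 ≤ q) (hh : 2 ≤ h) (ha1 : 1 ≤ a)
    (ha : a < q ^ (h+2)) (hqa : ¬ q ∣ a) :
    (a / q ^ (h+1) + a % q ^ (h+1) * q ^ h < a ∨
     a / q ^ h + a % q ^ h * q ^ (h+1) < a)
    ↔ ∃ x w z y : ℕ, x < q ∧ w < q ∧ z < q ∧ y < q ∧ 1 ≤ y ∧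
        ((w = 0 ∧ z < x) ∨ (z = 0 ∧ 1 ≤ w ∧ y ≤ x)) ∧
        a = x * q^(h+1) + w * q^h + z * q + y := by
  have hq0 : 0 < q := by omega
  have hQ0 : 0 < q ^ h := Nat.pow_pos hq0
  have hQ10 : 0 < q ^ (h+1) := Nat.pow_pos hq0
  have hQq : q ^ (h+1) = q ^ h * q := pow_succ q h
  have hQ2 : q * q ≤ q ^ h := by
    calc q * q = q ^ 2 := (sq q).symm
      _ ≤ q ^ h := Nat.pow_le_pow_right hq0 hh
  have hqq : q ≤ q * q := Nat.le_mul_of_pos_left q hq0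
  have hsplit : q * q ^ (h+1) = q ^ (h+2) := (pow_succ' q (h+1)).symm
  have hsplit2 : q * q * q ^ h = q ^ (h+2) := by
    rw [← hsplit, hQq]; ring
  constructor
  · rintro (H | H)
    · -- case j = h : a = x * q^{h+1} + r with r ≤ x*q
      set x := a / q ^ (h+1) with hxdef
      set r := a % q ^ (h+1) with hrdef
      clear_value x r
      have hxr : a = x * q ^ (h+1) + r := by
        rw [hxdef, hrdef, mul_comm]; exact (Nat.div_add_mod a _).symm
      have hx : x < q := by
        rw [hxdef, Nat.div_lt_iff_lt_mul hQ10, hsplit]; exact ha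
      have hr1 : 1 ≤ r := by
        rcases Nat.eq_zero_or_pos r with h0 | h0
        · exfalso
          apply hqa
          have hz0 : a % q ^ (h+1) = 0 := by rw [← hrdef]; exact h0
          exact dvd_trans (dvd_pow_self q (by omega)) (Nat.dvd_of_mod_eq_zero hz0)
        · exact h0
      have hrx : r ≤ x * q := by
        by_contra hcon
        push_neg at hcon
        rw [hQq] at hxr
        have hxq : (x:ℤ) + 1 ≤ q := by exact_mod_cast hx
        have hcon' : (x:ℤ)*q + 1 ≤ r := by exact_mod_cast hcon
        have hQ2' : (q:ℤ)*q ≤ q^h := by exact_mod_cast hQ2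
        have hxr' : (a:ℤ) = x*((q:ℤ)^h*q) + r := by exact_mod_cast hxr
        have H' : (x:ℤ) + r*(q:ℤ)^h < a := by exact_mod_cast H
        have hq2' : (2:ℤ) ≤ q := by exact_mod_cast hq2
        have hQpos : (1:ℤ) ≤ (q:ℤ)^h := by nlinarith [hq2', hQ2']
        have p1 : (0:ℤ) ≤ ((r:ℤ) - (x*q+1)) * ((q:ℤ)^h - 1) :=
          mul_nonneg (by linarith) (by linarith)
        have p2 : (0:ℤ) ≤ ((q:ℤ) - 1 - x) * ((q:ℤ) - 1) :=
          mul_nonneg (by linarith) (by linarith)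
        nlinarith [p1, p2, H', hxr', hcon', hQ2', hq2']
      set z := r / q with hzdef
      set y := r % q with hydef
      clear_value z y
      have hzy : r = z * q + y := by
        rw [hzdef, hydef, mul_comm]; exact (Nat.div_add_mod r q).symm
      have hyq : y < q := by rw [hydef]; exact Nat.mod_lt _ hq0
      have hy1 : 1 ≤ y := by
        rcases Nat.eq_zero_or_pos y with h0 | h0
        · exfalso
          apply hqa
          have : a = x * q ^ (h+1) + z * q := by rw [hxr, hzy, h0, add_zero]
          rw [this, hQq]
          exact dvd_add ⟨x * q ^ h, by ring⟩ ⟨z, by ring⟩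
        · exact h0
      have hzx : z ≤ x := by
        have : z * q ≤ x * q := le_trans (by rw [hzdef]; exact Nat.div_mul_le_self r q) hrx
        exact Nat.le_of_mul_le_mul_right this hq0
      have hzxs : z < x := by
        rcases Nat.eq_or_lt_of_le hzx with he | hlt
        · exfalso; rw [he] at hzy; linarith [hzy, hrx, hy1]
        · exact hlt
      exact ⟨x, 0, z, y, hx, hq0, lt_of_le_of_lt hzx hx, hyq, hy1,
        Or.inl ⟨rfl, hzxs⟩, by rw [hxr, hzy]; ring⟩
    · -- case j = h+1
      set A := a / q ^ h with hAdef
      set r := a % q ^ h with hrdef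
      clear_value A r
      have har : a = A * q ^ h + r := by
        rw [hAdef, hrdef, mul_comm]; exact (Nat.div_add_mod a _).symm
      have hA : A < q * q := by
        rw [hAdef, Nat.div_lt_iff_lt_mul hQ0, hsplit2]; exact ha
      have hr1 : 1 ≤ r := by
        rcases Nat.eq_zero_or_pos r with h0 | h0
        · exfalso
          apply hqa
          have hz0 : a % q ^ h = 0 := by rw [← hrdef]; exact h0
          exact dvd_trans (dvd_pow_self q (by omega)) (Nat.dvd_of_mod_eq_zero hz0)
        · exact h0
      have hstep : r * q + 1 ≤ A := by
        by_contra hcon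
        push_neg at hcon
        rw [hQq] at H
        have hcon' : (A:ℤ) ≤ (r:ℤ)*q := by exact_mod_cast Nat.lt_succ_iff.mp hcon
        have har' : (a:ℤ) = A*(q:ℤ)^h + r := by exact_mod_cast har
        have H' : (A:ℤ) + r*((q:ℤ)^h*q) < a := by exact_mod_cast H
        have hq2' : (2:ℤ) ≤ q := by exact_mod_cast hq2
        have hQ2' : (q:ℤ)*q ≤ q^h := by exact_mod_cast hQ2
        have hQpos : (1:ℤ) ≤ (q:ℤ)^h := by nlinarith [hq2', hQ2']
        have p1 : (0:ℤ) ≤ ((r:ℤ)*q - A) * ((q:ℤ)^h - 1) :=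
          mul_nonneg (by linarith) (by linarith)
        have p2 : (0:ℤ) ≤ (r:ℤ) * ((q:ℤ) - 1) :=
          mul_nonneg (by positivity) (by linarith)
        nlinarith [p1, p2, H', har', hq2']
      have hrq : r < q := by
        have : r * q < q * q := by linarith [hstep, hA]
        exact lt_of_mul_lt_mul_right this (Nat.zero_le q)
      set x := A / q with hxdef
      set w := A % q with hwdef
      clear_value x w
      have hxw : A = x * q + w := by
        rw [hxdef, hwdef, mul_comm]; exact (Nat.div_add_mod A q).symm
      have hx : x < q := by
        rw [hxdef, Nat.div_lt_iff_lt_mul hq0]; exact hA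
      have hwq : w < q := by rw [hwdef]; exact Nat.mod_lt _ hq0
      have hyx : r ≤ x := by
        by_contra hcon
        push_neg at hcon
        have k1 : (x + 1) * q ≤ r * q := Nat.mul_le_mul_right _ (by omega)
        linarith [k1, hxw, hwq, hstep]
      have hx1 : 1 ≤ x := le_trans hr1 hyx
      have heq : a = x * q ^ (h+1) + w * q ^ h + 0 * q + r := by
        rw [har, hxw, hQq]; ring
      rcases Nat.eq_zero_or_pos w with hw0 | hw1
      · exact ⟨x, w, 0, r, hx, hwq, hq0, hrq, hr1, Or.inl ⟨hw0, hx1⟩, heq⟩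
      · exact ⟨x, w, 0, r, hx, hwq, hq0, hrq, hr1, Or.inr ⟨rfl, hw1, hyx⟩, heq⟩
  · rintro ⟨x, w, z, y, hx, hw, hz, hy, hy1, hcase, rfl⟩
    rcases hcase with ⟨hw0, hzx⟩ | ⟨hz0, hw1, hyx⟩
    · -- w = 0, z < x : rotation by h is smaller
      left
      subst hw0
      have ea : x * q^(h+1) + 0 * q^h + z * q + y = x * q^(h+1) + (z*q + y) := by ring
      rw [ea]
      have hsq : z * q + y < q ^ (h+1) := by
        have k1 : (z + 1) * q ≤ q * q := Nat.mul_le_mul_right _ (by omega)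
        have k2 : q * q ≤ q ^ (h+1) := le_trans hQ2 (Nat.pow_le_pow_right hq0 (by omega))
        linarith [k1, k2, hy]
      rw [div_of _ _ _ hQ10 hsq, mod_of _ _ _ hsq]
      have k1 : (z * q + y + 1) * q ^ h ≤ x * q * q ^ h := by
        apply Nat.mul_le_mul_right
        have : (z + 1) * q ≤ x * q := Nat.mul_le_mul_right _ (by omega)
        linarith [this, hy]
      have k2 : q ≤ q ^ h := le_trans hqq hQ2
      rw [hQq]
      nlinarith [k1, k2, hx, hy1, Nat.zero_le (z*q)]
    · -- z = 0, w ≥ 1, y ≤ x : rotation by h+1 is smaller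
      right
      subst hz0
      have ea : x * q^(h+1) + w * q^h + 0 * q + y = (x*q + w) * q^h + y := by
        rw [hQq]; ring
      rw [ea]
      have hsq : y < q ^ h := lt_of_lt_of_le hy (le_trans hqq hQ2)
      rw [div_of _ _ _ hQ0 hsq, mod_of _ _ _ hsq]
      have k1 : y * (q * q ^ h) ≤ x * (q * q ^ h) := Nat.mul_le_mul_right _ hyx
      have k2 : (x+1) * q ≤ q * q := Nat.mul_le_mul_right _ hx
      have k3 : 1 * q ^ h ≤ w * q ^ h := Nat.mul_le_mul_right _ hw1
      rw [hQq]
      linarith [k1, k2, k3, hQ2, hw, hy1]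


def T1 (q h : ℕ) : Finset ℕ :=
  ((Finset.range q).sigma (fun x => Finset.range x ×ˢ Finset.Ico 1 q)).image
    (fun p => p.1 * q^(h+1) + p.2.1 * q + p.2.2)

def T2 (q h : ℕ) : Finset ℕ :=
  ((Finset.range q).sigma (fun x => Finset.Ico 1 q ×ˢ Finset.Icc 1 x)).image
    (fun p => p.1 * q^(h+1) + p.2.1 * q^h + p.2.2)

lemma basic_pows (q h : ℕ) (hq2 : 2 ≤ q) (hh : 2 ≤ h) :
    q * q ≤ q ^ h ∧ q ^ h * q = q ^ (h+1) ∧ q ^ (h+1) * q = q ^ (h+2) := by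
  refine ⟨?_, (pow_succ q h).symm, (pow_succ q (h+1)).symm⟩
  calc q * q = q ^ 2 := (sq q).symm
    _ ≤ q ^ h := Nat.pow_le_pow_right (by omega) hh

-- digit extraction for T1-shaped numbers
lemma T1_digits (q h x z y : ℕ) (hq2 : 2 ≤ q) (hh : 2 ≤ h)
    (hx : x < q) (hz : z < q) (hy : y < q) :
    (x * q^(h+1) + z * q + y) / q^(h+1) = x ∧
    (x * q^(h+1) + z * q + y) % q^(h+1) = z * q + y := by
  obtain ⟨hQ2, hE1, hE2⟩ := basic_pows q h hq2 hh
  have hs : z * q + y < q ^ (h+1) := by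
    have k1 : (z + 1) * q ≤ q * q := Nat.mul_le_mul_right _ (by omega)
    have k2 : q ^ h ≤ q ^ (h+1) := Nat.pow_le_pow_right (by omega) (by omega)
    linarith [k1, hQ2, k2, hy]
  have e : x * q^(h+1) + z * q + y = x * q^(h+1) + (z * q + y) := by ring
  rw [e]
  exact ⟨div_of _ _ _ (Nat.pow_pos (by omega)) hs, mod_of _ _ _ hs⟩

-- digit extraction for T2-shaped numbers: division by q^h
lemma T2_digits (q h x w y : ℕ) (hq2 : 2 ≤ q) (hh : 2 ≤ h)
    (hx : x < q) (hw : w < q) (hy : y < q) :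
    (x * q^(h+1) + w * q^h + y) / q^h = x * q + w ∧
    (x * q^(h+1) + w * q^h + y) % q^h = y := by
  obtain ⟨hQ2, hE1, hE2⟩ := basic_pows q h hq2 hh
  have hs : y < q ^ h := by
    have : q ≤ q * q := Nat.le_mul_of_pos_left q (by omega)
    omega
  have e : x * q^(h+1) + w * q^h + y = (x * q + w) * q^h + y := by
    rw [← hE1]; ring
  rw [e]
  exact ⟨div_of _ _ _ (Nat.pow_pos (by omega)) hs, mod_of _ _ _ hs⟩

-- T1-shaped numbers have h-digit 0, T2-shaped have h-digit w
lemma T1_hdigit (q h x z y : ℕ) (hq2 : 2 ≤ q) (hh : 2 ≤ h)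
    (hx : x < q) (hz : z < q) (hy : y < q) :
    (x * q^(h+1) + z * q + y) / q^h % q = 0 := by
  obtain ⟨hQ2, hE1, hE2⟩ := basic_pows q h hq2 hh
  have hs : z * q + y < q ^ h := by
    have k1 : (z + 1) * q ≤ q * q := Nat.mul_le_mul_right _ (by omega)
    linarith [k1, hQ2, hy]
  have e : x * q^(h+1) + z * q + y = (x * q) * q^h + (z * q + y) := by
    rw [← hE1]; ring
  rw [e, div_of _ _ _ (Nat.pow_pos (by omega)) hs, Nat.mul_mod_left]

lemma T2_hdigit (q h x w y : ℕ) (hq2 : 2 ≤ q) (hh : 2 ≤ h)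
    (hx : x < q) (hw : w < q) (hy : y < q) :
    (x * q^(h+1) + w * q^h + y) / q^h % q = w := by
  rw [(T2_digits q h x w y hq2 hh hx hw hy).1, mod_of _ _ _ hw]

lemma mem_T_iff (q h a : ℕ) (hq2 : 2 ≤ q) (hh : 2 ≤ h) :
    (a ∈ T1 q h ∪ T2 q h) ↔ ∃ x w z y : ℕ, x < q ∧ w < q ∧ z < q ∧ y < q ∧ 1 ≤ y ∧
        ((w = 0 ∧ z < x) ∨ (z = 0 ∧ 1 ≤ w ∧ y ≤ x)) ∧
        a = x * q^(h+1) + w * q^h + z * q + y := by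
  rw [Finset.mem_union]
  constructor
  · rintro (h1 | h1)
    · rw [T1, Finset.mem_image] at h1
      obtain ⟨⟨x, z, y⟩, hp, heq⟩ := h1
      simp only [Finset.mem_sigma, Finset.mem_product, Finset.mem_range, Finset.mem_Ico] at hp
      exact ⟨x, 0, z, y, hp.1, by omega, lt_trans hp.2.1 hp.1, hp.2.2.2, hp.2.2.1,
        Or.inl ⟨rfl, hp.2.1⟩, by rw [← heq]; ring⟩
    · rw [T2, Finset.mem_image] at h1
      obtain ⟨⟨x, w, y⟩, hp, heq⟩ := h1
      simp only [Finset.mem_sigma, Finset.mem_product, Finset.mem_range, Finset.mem_Ico,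
        Finset.mem_Icc] at hp
      exact ⟨x, w, 0, y, hp.1, hp.2.1.2, by omega, by omega, hp.2.2.1,
        Or.inr ⟨rfl, hp.2.1.1, hp.2.2.2⟩, by rw [← heq]; ring⟩
  · rintro ⟨x, w, z, y, hx, hw, hz, hy, hy1, hcase, rfl⟩
    rcases hcase with ⟨hw0, hzx⟩ | ⟨hz0, hw1, hyx⟩
    · left
      rw [T1, Finset.mem_image]
      refine ⟨⟨x, z, y⟩, ?_, ?_⟩
      · simp only [Finset.mem_sigma, Finset.mem_product, Finset.mem_range, Finset.mem_Ico]
        exact ⟨hx, hzx, hy1, hy⟩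
      · subst hw0; ring
    · right
      rw [T2, Finset.mem_image]
      refine ⟨⟨x, w, y⟩, ?_, ?_⟩
      · simp only [Finset.mem_sigma, Finset.mem_product, Finset.mem_range, Finset.mem_Ico,
          Finset.mem_Icc]
        exact ⟨hx, ⟨hw1, hw⟩, hy1, hyx⟩
      · subst hz0; ring

lemma card_T (q h : ℕ) (hq2 : 2 ≤ q) (hh : 2 ≤ h) :
    (T1 q h ∪ T2 q h).card = q * (q - 1) ^ 2 := by
  obtain ⟨hQ2, hE1, hE2⟩ := basic_pows q h hq2 hh
  have hdisj : Disjoint (T1 q h) (T2 q h) := by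
    rw [Finset.disjoint_left]
    rintro a h1 h2
    rw [T1, Finset.mem_image] at h1
    obtain ⟨⟨x, z, y⟩, hp, heq⟩ := h1
    simp only [Finset.mem_sigma, Finset.mem_product, Finset.mem_range, Finset.mem_Ico] at hp
    rw [T2, Finset.mem_image] at h2
    obtain ⟨⟨x', w', y'⟩, hp', heq'⟩ := h2
    simp only [Finset.mem_sigma, Finset.mem_product, Finset.mem_range, Finset.mem_Ico,
      Finset.mem_Icc] at hp'
    have d1 : a / q^h % q = 0 := by
      rw [← heq]; exact T1_hdigit q h x z y hq2 hh hp.1 (by omega) hp.2.2.2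
    have d2 : a / q^h % q = w' := by
      rw [← heq']; exact T2_hdigit q h x' w' y' hq2 hh hp'.1 hp'.2.1.2 (by omega)
    omega
  have hinj1 : (T1 q h).card = ∑ x ∈ Finset.range q, x * (q - 1) := by
    rw [T1, Finset.card_image_of_injOn, Finset.card_sigma]
    · congr 1
      funext x
      rw [Finset.card_product, Finset.card_range, Nat.card_Ico]
    · rintro ⟨x, z, y⟩ hp ⟨x', z', y'⟩ hp' heq
      simp only [Finset.mem_coe, Finset.mem_sigma, Finset.mem_product, Finset.mem_range,
        Finset.mem_Ico] at hp hp'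
      simp only at heq
      have e1 := T1_digits q h x z y hq2 hh hp.1 (by omega) hp.2.2.2
      have e1' := T1_digits q h x' z' y' hq2 hh hp'.1 (by omega) hp'.2.2.2
      have hxx : x = x' := by rw [← e1.1, ← e1'.1, heq]
      have hzy : z * q + y = z' * q + y' := by rw [← e1.2, ← e1'.2, heq]
      have hzz : z = z' ∧ y = y' := by
        constructor
        · have := congrArg (fun t => t / q) hzy
          simpa [div_of q _ _ (by omega) hp.2.2.2, div_of q _ _ (by omega) hp'.2.2.2] using this
        · have := congrArg (fun t => t % q) hzy
          simpa [mod_of q _ _ hp.2.2.2, mod_of q _ _ hp'.2.2.2] using this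
      subst hxx
      obtain ⟨h1, h2⟩ := hzz
      subst h1; subst h2
      rfl
  have hinj2 : (T2 q h).card = ∑ x ∈ Finset.range q, (q - 1) * x := by
    rw [T2, Finset.card_image_of_injOn, Finset.card_sigma]
    · congr 1
      funext x
      rw [Finset.card_product, Nat.card_Ico, Nat.card_Icc, Nat.add_sub_cancel]
    · rintro ⟨x, w, y⟩ hp ⟨x', w', y'⟩ hp' heq
      simp only [Finset.mem_coe, Finset.mem_sigma, Finset.mem_product, Finset.mem_range,
        Finset.mem_Ico, Finset.mem_Icc] at hp hp'
      simp only at heq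
      have e1 := T2_digits q h x w y hq2 hh hp.1 hp.2.1.2 (by omega)
      have e1' := T2_digits q h x' w' y' hq2 hh hp'.1 hp'.2.1.2 (by omega)
      have hxw : x * q + w = x' * q + w' := by rw [← e1.1, ← e1'.1, heq]
      have hyy : y = y' := by rw [← e1.2, ← e1'.2, heq]
      have hxx : x = x' ∧ w = w' := by
        constructor
        · have := congrArg (fun t => t / q) hxw
          simpa [div_of q _ _ (by omega) hp.2.1.2, div_of q _ _ (by omega) hp'.2.1.2] using this
        · have := congrArg (fun t => t % q) hxw
          simpa [mod_of q _ _ hp.2.1.2, mod_of q _ _ hp'.2.1.2] using this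
      obtain ⟨h1, h2⟩ := hxx
      subst h1; subst h2; subst hyy
      rfl
  rw [Finset.card_union_of_disjoint hdisj, hinj1, hinj2]
  have G : (∑ x ∈ Finset.range q, x) * 2 = q * (q - 1) := Finset.sum_range_id_mul_two q
  have e1 : ∑ x ∈ Finset.range q, x * (q-1) = (∑ x ∈ Finset.range q, x) * (q-1) :=
    (Finset.sum_mul _ _ _).symm
  have e2 : ∑ x ∈ Finset.range q, (q-1) * x = (q-1) * (∑ x ∈ Finset.range q, x) :=
    (Finset.mul_sum _ _ _).symm
  rw [e1, e2]
  set S := ∑ x ∈ Finset.range q, x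
  calc S * (q-1) + (q-1) * S = (S * 2) * (q - 1) := by ring
    _ = q * (q-1) * (q-1) := by rw [G]
    _ = q * (q-1)^2 := by ring

end Stmt7

theorem stmt_7 (q m : ℕ) (hq : IsPrimePow q) (hm : Odd m) (hm5 : 5 ≤ m) :
    {a : ℕ | 1 ≤ a ∧ a ≤ q ^ ((m - 1) / 2 + 2) ∧ ¬ q ∣ a ∧
      ¬ IsCosetLeader q (q ^ m - 1) a}.ncard = q * (q - 1) ^ 2 := by
  have hq2 : 2 ≤ q := hq.two_le
  obtain ⟨k, hk⟩ := hm
  set h := (m - 1) / 2 with hhdef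
  have hmh : m = 2 * h + 1 := by omega
  have hh : 2 ≤ h := by omega
  set n := q ^ m - 1 with hndef
  have hpow1 : 1 ≤ q ^ m := Nat.one_le_pow _ _ (by omega)
  have hn : q ^ (2*h+1) = n + 1 := by rw [← hmh, hndef]; omega
  obtain ⟨hQ2, hE1, hE2⟩ := Stmt7.basic_pows q h hq2 hh
  have hset : {a : ℕ | 1 ≤ a ∧ a ≤ q ^ (h + 2) ∧ ¬ q ∣ a ∧ ¬ IsCosetLeader q n a}
      = ↑(Stmt7.T1 q h ∪ Stmt7.T2 q h) := by
    ext a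
    simp only [Set.mem_setOf_eq, Finset.coe_union, Set.mem_union, Finset.mem_coe]
    rw [← Finset.mem_union, Stmt7.mem_T_iff q h a hq2 hh]
    constructor
    · rintro ⟨h1, h2, h3, h4⟩
      have ha' : a < q ^ (h+2) := by
        rcases Nat.eq_or_lt_of_le h2 with he | hlt
        · exact absurd (he ▸ dvd_pow_self q (Nat.succ_ne_zero (h+1))) h3
        · exact hlt
      rw [Stmt7.leader_iff q h n a hq2 hh hn h1 ha' h3, not_and_or, not_le, not_le] at h4
      rw [← Stmt7.char q h a hq2 hh h1 ha' h3]
      exact h4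
    · rintro hmem
      obtain ⟨x, w, z, y, hx, hw, hz, hy, hy1, hcase, rfl⟩ := hmem
      have h1 : 1 ≤ x * q^(h+1) + w * q^h + z * q + y :=
        le_trans hy1 (Nat.le_add_left y _)
      have ha' : x * q^(h+1) + w * q^h + z * q + y < q ^ (h+2) := by
        have k1 : (x + 1) * q^(h+1) ≤ q * q^(h+1) := Nat.mul_le_mul_right _ (by omega)
        have k2 : (w + 1) * q^h ≤ q * q^h := Nat.mul_le_mul_right _ (by omega)
        have k3 : (z + 1) * q ≤ q * q := Nat.mul_le_mul_right _ (by omega)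
        have e1 : q * q^h = q^(h+1) := by rw [mul_comm]; exact hE1
        have e2 : q * q^(h+1) = q^(h+2) := by rw [mul_comm]; exact hE2
        linarith [k1, k2, k3, hQ2, hy, e1.le, e1.ge, e2.le, e2.ge]
      have h3 : ¬ q ∣ x * q^(h+1) + w * q^h + z * q + y := by
        intro hdvd
        have eh : q ^ h = q ^ (h-1) * q := by rw [← pow_succ]; congr 1; omega
        have e : x * q^(h+1) + w * q^h + z * q + y
            = (x * q^h + w * q^(h-1) + z) * q + y := by
          rw [← hE1, eh]; ring
        have hmod : (x * q^(h+1) + w * q^h + z * q + y) % q = y := by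
          rw [e]; exact Stmt7.mod_of _ _ _ hy
        rw [Nat.dvd_iff_mod_eq_zero] at hdvd
        omega
      refine ⟨h1, le_of_lt ha', h3, ?_⟩
      intro L
      rw [Stmt7.leader_iff q h n _ hq2 hh hn h1 ha' h3] at L
      have hdisj := (Stmt7.char q h _ hq2 hh h1 ha' h3).mpr
        ⟨x, w, z, y, hx, hw, hz, hy, hy1, hcase, rfl⟩
      rcases hdisj with d | d
      · exact absurd L.1 (not_le.mpr d)
      · exact absurd L.2 (not_le.mpr d)
  rw [hset, Set.ncard_coe_finset, Stmt7.card_T q h hq2 hh]
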